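/- Let τ < 0 and let θ : [0,∞) → ℝ be twice continuously differentiable with θ''(t) + τ·θ'(t) + θ(t)² − 1 = 0 for all t ≥ 0 and θ(t) → 1 as t → ∞. Then θ(t) = 1 for all t ≥ 0. -/

import Mathlib

open Set Filter

/-- If a function has derivative bounded below by `m > 0` on `[T', \infty)` but is bounded above
by `C` eventually, we get a contradiction. -/
lemma no_escape_aux (psi psi' : ℝ → ℝ) (m T' C T2 : ℝ) (hm : 0 < m) (hT' : 0 ≤ T')
    (hpsic : ContinuousOn psi (Ici 0))
    (hd : ∀ x : ℝ, 0 < x → HasDerivAt psi (psi' x) x)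
    (hlow : ∀ t, T' ≤ t → m ≤ psi' t)
    (hub : ∀ t, T2 ≤ t → psi t < C) : False := by
  set g : ℝ → ℝ := fun t => psi t - m * t with hg
  have hgd : ∀ x : ℝ, 0 < x → HasDerivAt g (psi' x - m) x := by
    intro x hx
    have hmt : HasDerivAt (fun s : ℝ => m * s) m x := by
      simpa using (hasDerivAt_id x).const_mul m
    exact (hd x hx).sub hmt
  have hmono : MonotoneOn g (Ici T') := by
    apply monotoneOn_of_deriv_nonneg (convex_Ici T')
    · exact (hpsic.mono (Ici_subset_Ici.mpr hT')).sub
        ((continuous_const.mul continuous_id).continuousOn)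
    · rw [interior_Ici]
      intro x hx
      exact (hgd x (lt_of_le_of_lt hT' hx)).differentiableAt.differentiableWithinAt
    · rw [interior_Ici]
      intro x hx
      rw [(hgd x (lt_of_le_of_lt hT' hx)).deriv]
      linarith [hlow x hx.le]
  set B : ℝ := max T' T2 with hB
  set A : ℝ := max 0 ((C - psi T') / m) with hA
  set t : ℝ := B + A + 1 with ht
  have hBT' : T' ≤ B := le_max_left _ _
  have hBT2 : T2 ≤ B := le_max_right _ _
  have hA0 : 0 ≤ A := le_max_left _ _
  have hA1 : (C - psi T') / m ≤ A := le_max_right _ _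
  have h1 : T' ≤ t := by linarith
  have h2 : T2 ≤ t := by linarith
  have h3 : g T' ≤ g t := hmono self_mem_Ici h1 h1
  have h4 : psi t < C := hub t h2
  have h6 : m * ((C - psi T') / m) = C - psi T' := by field_simp
  have h7 : m * T' ≤ m * B := mul_le_mul_of_nonneg_left hBT' hm.le
  have h8 : m * ((C - psi T') / m) ≤ m * A := mul_le_mul_of_nonneg_left hA1 hm.le
  have hmt : m * t = m * B + m * A + m := by rw [ht]; ring
  simp only [hg] at h3
  linarith

theorem stmt_13 (τ : ℝ) (hτ : τ < 0) (θ θ' θ'' : ℝ → ℝ)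
    (hd1 : ∀ t ∈ Ici (0 : ℝ), HasDerivWithinAt θ (θ' t) (Ici 0) t)
    (hd2 : ∀ t ∈ Ici (0 : ℝ), HasDerivWithinAt θ' (θ'' t) (Ici 0) t)
    (hc : ContinuousOn θ'' (Ici 0))
    (heq : ∀ t : ℝ, 0 ≤ t → θ'' t + τ * θ' t + (θ t) ^ 2 - 1 = 0)
    (hlim : Tendsto θ atTop (nhds 1)) :
    ∀ t : ℝ, 0 ≤ t → θ t = 1 := by
  have hθc : ContinuousOn θ (Ici 0) := fun t ht => (hd1 t ht).continuousWithinAt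
  have hθ'c : ContinuousOn θ' (Ici 0) := fun t ht => (hd2 t ht).continuousWithinAt
  set E : ℝ → ℝ := fun t => θ' t ^ 2 / 2 + θ t ^ 3 / 3 - θ t with hEdef
  -- derivative of the energy
  have hEd : ∀ t ∈ Ici (0:ℝ), HasDerivWithinAt E (-τ * θ' t ^ 2) (Ici 0) t := by
    intro t ht
    have h1 : HasDerivWithinAt (fun s => θ' s ^ 2 / 2 + θ s ^ 3 / 3 - θ s)
        (((2:ℕ) * θ' t ^ 1 * θ'' t) / 2 + ((3:ℕ) * θ t ^ 2 * θ' t) / 3 - θ' t) (Ici 0) t :=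
      ((((hd2 t ht).pow 2).div_const 2).add (((hd1 t ht).pow 3).div_const 3)).sub (hd1 t ht)
    convert h1 using 1
    have h2 := heq t ht
    push_cast
    linear_combination (-(θ' t)) * h2
  have hEc : ContinuousOn E (Ici 0) := fun t ht => (hEd t ht).continuousWithinAt
  -- energy is nondecreasing
  have hEm : MonotoneOn E (Ici 0) := by
    apply monotoneOn_of_deriv_nonneg (convex_Ici 0) hEc
    · intro x hx
      rw [interior_Ici] at hx
      exact ((hEd x (show (0:ℝ) ≤ x from le_of_lt hx)).hasDerivAt (Ici_mem_nhds hx)).differentiableAt.differentiableWithinAt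
    · intro x hx
      rw [interior_Ici] at hx
      rw [((hEd x (show (0:ℝ) ≤ x from le_of_lt hx)).hasDerivAt (Ici_mem_nhds hx)).deriv]
      nlinarith [sq_nonneg (θ' x)]
  have hEeq : ∀ s : ℝ, E s = θ' s ^ 2 / 2 + θ s ^ 3 / 3 - θ s := fun s => rfl
  clear_value E
  -- eventually θ between 0 and 2
  have hev02 : ∀ᶠ t in atTop, 0 < θ t ∧ θ t < 2 :=
    (hlim.eventually_const_lt (by norm_num)).and (hlim.eventually_lt_const (by norm_num))
  obtain ⟨T2, hT2⟩ := hev02.exists_forall_of_atTop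
  -- E ≤ -2/3 everywhere on [0,∞)
  have hEle : ∀ a : ℝ, 0 ≤ a → E a ≤ -2/3 := by
    by_contra hcon
    push_neg at hcon
    obtain ⟨a, ha0, ha⟩ := hcon
    set c : ℝ := E a + 2/3 with hcd
    clear_value c
    have hcpos : 0 < c := by linarith
    have hcube : Tendsto (fun t => θ t ^ 3 / 3 - θ t) atTop (nhds ((1:ℝ)^3/3 - 1)) :=
      ((hlim.pow 3).div_const 3).sub hlim
    have hev : ∀ᶠ t in atTop, θ t ^ 3 / 3 - θ t < -2/3 + c/2 :=
      hcube.eventually_lt_const (by norm_num; linarith)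
    obtain ⟨T, hTa⟩ := hev.exists_forall_of_atTop
    set T' : ℝ := max T a with hT'd
    have hT'a : a ≤ T' := le_max_right _ _
    have hT'0 : 0 ≤ T' := le_trans ha0 hT'a
    -- θ' t ^ 2 > c on [T', ∞)
    have hm : ∀ t, T' ≤ t → c < θ' t ^ 2 := by
      intro t ht
      have ht0 : (0:ℝ) ≤ t := le_trans hT'0 ht
      have h1 : E a ≤ E t := hEm ha0 ht0 (le_trans hT'a ht)
      have h2 : θ t ^ 3 / 3 - θ t < -2/3 + c/2 := hTa t (le_trans (le_max_left _ _) ht)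
      have h3 := hEeq t
      have h4 : c = E a + 2/3 := hcd
      linarith
    have hmm : 0 < Real.sqrt c := Real.sqrt_pos.mpr hcpos
    have hsq : Real.sqrt c ^ 2 = c := Real.sq_sqrt hcpos.le
    have hdAt : ∀ x : ℝ, 0 < x → HasDerivAt θ (θ' x) x :=
      fun x hx => (hd1 x hx.le).hasDerivAt (Ici_mem_nhds hx)
    have hT'ne : θ' T' ≠ 0 := by
      intro h0
      have := hm T' le_rfl
      rw [h0] at this
      nlinarith
    rcases hT'ne.lt_or_gt with hneg | hpos
    · -- θ' < 0 on [T', ∞): θ → -∞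
      have hsign : ∀ t, T' ≤ t → θ' t < 0 := by
        intro t ht
        by_contra hnp
        push_neg at hnp
        have hne : θ' t ≠ 0 := by
          intro h0
          have := hm t ht
          rw [h0] at this
          nlinarith
        have hpos' : 0 < θ' t := lt_of_le_of_ne hnp (Ne.symm hne)
        have hcont : ContinuousOn θ' (Icc T' t) :=
          hθ'c.mono (fun x hx => le_trans hT'0 hx.1)
        have h0mem : (0:ℝ) ∈ Icc (θ' T') (θ' t) := ⟨hneg.le, hpos'.le⟩
        obtain ⟨s, hs, hs0⟩ := intermediate_value_Icc ht hcont h0mem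
        have := hm s hs.1
        rw [hs0] at this
        nlinarith
      have hlow : ∀ t, T' ≤ t → Real.sqrt c ≤ -θ' t := by
        intro t ht
        have h1 := hm t ht
        have h2 := hsign t ht
        nlinarith [hmm]
      exact no_escape_aux (fun t => -θ t) (fun t => -θ' t) (Real.sqrt c) T' 0 T2 hmm hT'0
        hθc.neg (fun x hx => (hdAt x hx).neg) hlow
        (fun t ht => by have := (hT2 t ht).1; show -θ t < 0; linarith)
    · -- θ' > 0 on [T', ∞): θ → ∞
      have hsign : ∀ t, T' ≤ t → 0 < θ' t := by
        intro t ht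
        by_contra hnp
        push_neg at hnp
        have hne : θ' t ≠ 0 := by
          intro h0
          have := hm t ht
          rw [h0] at this
          nlinarith
        have hneg' : θ' t < 0 := lt_of_le_of_ne hnp hne
        have hcont : ContinuousOn θ' (Icc T' t) :=
          hθ'c.mono (fun x hx => le_trans hT'0 hx.1)
        have h0mem : (0:ℝ) ∈ Icc (θ' t) (θ' T') := ⟨hneg'.le, hpos.le⟩
        obtain ⟨s, hs, hs0⟩ := intermediate_value_Icc' ht hcont h0mem
        have := hm s hs.1
        rw [hs0] at this
        nlinarith
      have hlow : ∀ t, T' ≤ t → Real.sqrt c ≤ θ' t := by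
        intro t ht
        have h1 := hm t ht
        have h2 := hsign t ht
        nlinarith [hmm]
      exact no_escape_aux θ θ' (Real.sqrt c) T' 2 T2 hmm hT'0 hθc hdAt hlow
        (fun t ht => (hT2 t ht).2)
  -- eventually θ = 1 and θ' = 0
  have hev1 : ∃ T : ℝ, 0 ≤ T ∧ ∀ t : ℝ, T ≤ t → θ t = 1 ∧ θ' t = 0 := by
    refine ⟨max T2 0, le_max_right _ _, fun t ht => ?_⟩
    have ht0 : (0:ℝ) ≤ t := le_trans (le_max_right _ _) ht
    obtain ⟨h0, h2⟩ := hT2 t (le_trans (le_max_left _ _) ht)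
    have hE := hEle t ht0
    rw [hEeq t] at hE
    have h3 : θ' t ^ 2 / 2 + θ t ^ 3 / 3 - θ t ≤ -2/3 := hE
    have key : (θ t - 1)^2 * (θ t + 2) ≤ 0 := by nlinarith [sq_nonneg (θ' t)]
    have hθ1 : θ t = 1 := by nlinarith [sq_nonneg (θ t - 1)]
    refine ⟨hθ1, ?_⟩
    have h4 : θ' t ^ 2 ≤ 0 := by nlinarith
    nlinarith [sq_nonneg (θ' t)]
  obtain ⟨T, hT0, hT⟩ := hev1
  -- backward uniqueness via Gronwall
  intro t ht
  rcases le_or_gt T t with h | h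
  · exact (hT t h).1
  · set f : ℝ → ℝ × ℝ := fun s => (θ s, θ' s) with hf
    have hfc : ContinuousOn f (Icc 0 T) :=
      (hθc.mono Icc_subset_Ici_self).prodMk (hθ'c.mono Icc_subset_Ici_self)
    obtain ⟨R, hR⟩ := (isCompact_Icc : IsCompact (Icc (0:ℝ) T)).exists_bound_of_continuousOn hfc
    set R' : ℝ := max R 1 with hR'd
    have hR'1 : (1:ℝ) ≤ R' := le_max_right _ _
    have hR'0 : (0:ℝ) < R' := lt_of_lt_of_le one_pos hR'1
    set v : ℝ → ℝ × ℝ → ℝ × ℝ := fun _ p => (p.2, 1 - p.1^2 - τ * p.2) with hv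
    set K : NNReal := Real.toNNReal (2*R' + |τ| + 1) with hK
    have hKc : (K:ℝ) = 2*R' + |τ| + 1 := Real.coe_toNNReal _ (by positivity)
    have hlip : ∀ s : ℝ, LipschitzOnWith K (v s) (Metric.closedBall 0 R') := by
      intro s
      rw [lipschitzOnWith_iff_dist_le_mul]
      intro p hp q hq
      have hp1 : |p.1| ≤ R' := by
        have h := mem_closedBall_zero_iff.mp hp
        rw [Prod.norm_def] at h
        exact le_trans (le_max_left _ _) h
      have hq1 : |q.1| ≤ R' := by
        have h := mem_closedBall_zero_iff.mp hq
        rw [Prod.norm_def] at h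
        exact le_trans (le_max_left _ _) h
      have hd1q : |p.1 - q.1| ≤ dist p q := by
        rw [Prod.dist_eq]
        exact le_trans (le_of_eq (Real.dist_eq _ _).symm) (le_max_left _ _)
      have hd2q : |p.2 - q.2| ≤ dist p q := by
        rw [Prod.dist_eq]
        exact le_trans (le_of_eq (Real.dist_eq _ _).symm) (le_max_right _ _)
      rw [Prod.dist_eq]
      apply max_le
      · simp only [hv]
        rw [Real.dist_eq]
        rw [hKc]
        nlinarith [dist_nonneg (x := p) (y := q), abs_nonneg τ,
          mul_nonneg (by positivity : (0:ℝ) ≤ 2*R' + |τ|) (dist_nonneg (x := p) (y := q))]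
      · simp only [hv]
        rw [Real.dist_eq]
        have habs : |(1 - p.1^2 - τ*p.2) - (1 - q.1^2 - τ*q.2)|
            ≤ (|p.1| + |q.1|) * |p.1 - q.1| + |τ| * |p.2 - q.2| := by
          have heq2 : (1 - p.1^2 - τ*p.2) - (1 - q.1^2 - τ*q.2)
              = -((p.1+q.1)*(p.1-q.1)) + -(τ*(p.2-q.2)) := by ring
          rw [heq2]
          refine le_trans (abs_add_le _ _) ?_
          rw [abs_neg, abs_neg, abs_mul, abs_mul]
          gcongr
          exact abs_add_le _ _
        refine le_trans habs ?_
        have h2 : (|p.1| + |q.1|) * |p.1 - q.1| ≤ (R' + R') * dist p q :=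
          mul_le_mul (by linarith) hd1q (abs_nonneg _) (by linarith)
        have h3 : |τ| * |p.2 - q.2| ≤ |τ| * dist p q :=
          mul_le_mul_of_nonneg_left hd2q (abs_nonneg _)
        rw [hKc]
        nlinarith [dist_nonneg (x := p) (y := q)]
    have hfd : ∀ s ∈ Ioc (0:ℝ) T, HasDerivWithinAt f (v s (f s)) (Iic s) s := by
      intro s hs
      have hs0 : (0:ℝ) < s := hs.1
      have h1 : HasDerivAt θ (θ' s) s := (hd1 s hs0.le).hasDerivAt (Ici_mem_nhds hs0)
      have h2 : HasDerivAt θ' (θ'' s) s := (hd2 s hs0.le).hasDerivAt (Ici_mem_nhds hs0)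
      have h3 : HasDerivAt f (θ' s, θ'' s) s := h1.prodMk h2
      have hveq : v s (f s) = (θ' s, θ'' s) := by
        simp only [hv, hf]
        have h5 := heq s hs0.le
        have h4 : 1 - θ s ^ 2 - τ * θ' s = θ'' s := by linarith
        rw [h4]
      rw [hveq]
      exact h3.hasDerivWithinAt
    have hfs : ∀ s ∈ Ioc (0:ℝ) T, f s ∈ Metric.closedBall (0:ℝ×ℝ) R' := by
      intro s hs
      rw [mem_closedBall_zero_iff]
      exact le_trans (hR s (Ioc_subset_Icc_self hs)) (le_max_left _ _)
    have hgd : ∀ s ∈ Ioc (0:ℝ) T,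
        HasDerivWithinAt (fun _ : ℝ => ((1:ℝ), (0:ℝ))) (v s ((1:ℝ),(0:ℝ))) (Iic s) s := by
      intro s hs
      have hveq : v s ((1:ℝ),(0:ℝ)) = 0 := by
        simp only [hv]
        norm_num
      rw [hveq]
      exact (hasDerivAt_const s _).hasDerivWithinAt
    have hgs : ∀ s ∈ Ioc (0:ℝ) T, ((1:ℝ),(0:ℝ)) ∈ Metric.closedBall (0:ℝ×ℝ) R' := by
      intro s hs
      rw [mem_closedBall_zero_iff, Prod.norm_def]
      simp only [norm_one, norm_zero]
      rw [max_eq_left zero_le_one]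
      exact hR'1
    have hb : f T = ((1:ℝ),(0:ℝ)) := by
      obtain ⟨h1, h2⟩ := hT T le_rfl
      simp only [hf, h1, h2]
    have huniq := ODE_solution_unique_of_mem_Icc_left (fun s _ => hlip s) hfc hfd hfs
      continuousOn_const hgd hgs hb
    have hres := huniq ⟨ht, h.le⟩
    have hres2 : θ t = 1 ∧ θ' t = 0 := by simpa [hf, Prod.ext_iff] using hres
    exact hres2.1
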